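/- Let G = (V,E) be a graph and C ⊆ V a cluster whose boundary Γ(C) is α-well-linked in G[C], for some 0 < α ≤ 1. Let (A,B) be a minimum ρ-balanced cut of G[C] with respect to Γ(C), for some 0 < ρ ≤ 1/4, with |Γ(C) ∩ A| ≥ |Γ(C) ∩ B|. Then the boundary of A in G is α/(2+α)-well-linked in G[A]. -/

import Mathlib

attribute [local instance] Classical.propDecidable

noncomputable section

variable {V : Type}

/-- The degree of a vertex `v` in the simple graph `G`. -/
def deg [Fintype V] (G : SimpleGraph V) (v : V) : ℕ :=
  (Finset.univ.filter (fun u => G.Adj v u)).card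

/-- The boundary `Γ(C)` of a cluster `C`: the vertices of `C` having a neighbor outside `C`. -/
def bdry (G : SimpleGraph V) (C : Finset V) : Finset V :=
  C.filter (fun v => ∃ u, u ∉ C ∧ G.Adj v u)

/-- The number of edges `|E(A,B)|` with one endpoint in `A` and the other in `B`
(for disjoint `A`, `B`). -/
def cutCard (G : SimpleGraph V) (A B : Finset V) : ℕ :=
  ((A ×ˢ B).filter (fun ab => G.Adj ab.1 ab.2)).card

/-- A flow in `G[C]` from `A` to `B`, in which every vertex of `A` sends exactly one
unit of flow, every vertex of `B` receives exactly one unit of flow, and the total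
flow through any edge is at most `η`. -/
def HasUnitFlowIn (G : SimpleGraph V) (C A B : Finset V) (η : ℝ) : Prop :=
  ∃ (P : Finset (Σ u v : V, G.Walk u v)) (f : (Σ u v : V, G.Walk u v) → ℝ),
    (∀ p ∈ P, 0 ≤ f p) ∧
    (∀ p ∈ P, p.1 ∈ A ∧ p.2.1 ∈ B) ∧
    (∀ p ∈ P, ∀ x ∈ p.2.2.support, x ∈ C) ∧
    (∀ a ∈ A, ∑ p ∈ P.filter (fun p => p.1 = a), f p = 1) ∧
    (∀ b ∈ B, ∑ p ∈ P.filter (fun p => p.2.1 = b), f p = 1) ∧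
    (∀ e : Sym2 V, ∑ p ∈ P.filter (fun p => e ∈ p.2.2.edges), f p ≤ η)

/-- `T` is `α`-well-linked in `G[C]`: every pair of disjoint equal-sized subsets of `T`
can be connected, one-to-one, by a flow of edge-congestion at most `1/α` inside `C`. -/
def WellLinkedIn (G : SimpleGraph V) (C T : Finset V) (α : ℝ) : Prop :=
  ∀ T' T'' : Finset V, T' ⊆ T → T'' ⊆ T → Disjoint T' T'' → T'.card = T''.card →
    HasUnitFlowIn G C T' T'' (1 / α)

/-- `T` is `(k',α)`-well-linked in `G[C]`. -/
def WellLinkedKIn (G : SimpleGraph V) (C T : Finset V) (k' : ℕ) (α : ℝ) : Prop :=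
  ∀ T' T'' : Finset V, T' ⊆ T → T'' ⊆ T → Disjoint T' T'' → T'.card = T''.card →
    T'.card ≤ k' → HasUnitFlowIn G C T' T'' (1 / α)

/-- `T` is `α`-well-linked in `G`. -/
def WellLinked [Fintype V] (G : SimpleGraph V) (T : Finset V) (α : ℝ) : Prop :=
  WellLinkedIn G Finset.univ T α

/-- There is a family of pairwise vertex-disjoint paths in `G`, one starting at each
vertex of `A`, each ending at a (necessarily distinct) vertex of `B`. -/
def NodeLinkedSets (G : SimpleGraph V) (A B : Finset V) : Prop :=
  ∃ P : Finset (Σ u v : V, G.Walk u v),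
    (∀ p ∈ P, p.2.2.IsPath ∧ p.1 ∈ A ∧ p.2.1 ∈ B) ∧
    (∀ a ∈ A, ∃ p ∈ P, p.1 = a) ∧
    (∀ p ∈ P, ∀ q ∈ P, p ≠ q → ∀ x ∈ p.2.2.support, x ∉ q.2.2.support)

/-- `T` is node-well-linked in `G`. -/
def NodeWellLinked (G : SimpleGraph V) (T : Finset V) : Prop :=
  ∀ T' T'' : Finset V, T' ⊆ T → T'' ⊆ T → Disjoint T' T'' → T'.card = T''.card →
    NodeLinkedSets G T' T''

/-- `(T₁, T₂)` are node-linked in `G`. -/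
def NodeLinked (G : SimpleGraph V) (T₁ T₂ : Finset V) : Prop :=
  ∀ T' T'' : Finset V, T' ⊆ T₁ → T'' ⊆ T₂ → T'.card = T''.card → NodeLinkedSets G T' T''

/-- `(A,B)` is a `ρ`-balanced cut of the cluster `C` with respect to the vertex set `Γ`. -/
def IsBalancedCut (Γ A B C : Finset V) (ρ : ℝ) : Prop :=
  A ∪ B = C ∧ Disjoint A B ∧
    ρ * (Γ.card : ℝ) ≤ ((A ∩ Γ).card : ℝ) ∧ ρ * (Γ.card : ℝ) ≤ ((B ∩ Γ).card : ℝ)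

namespace Stmt4

variable {V : Type}

/-- number of times walk `w` traverses the directed step `(x,y)`. -/
def cnt {G : SimpleGraph V} : ∀ {u v : V}, G.Walk u v → V → V → ℕ
  | _, _, .nil, _, _ => 0
  | u, _, .cons (v := c) _ p, x, y => (if x = u ∧ y = c then 1 else 0) + cnt p x y

@[simp] lemma cnt_nil {G : SimpleGraph V} {u x y : V} : cnt (SimpleGraph.Walk.nil : G.Walk u u) x y = 0 := rfl

lemma cnt_cons {G : SimpleGraph V} {u c v x y : V} (h : G.Adj u c) (p : G.Walk c v) :
    cnt (SimpleGraph.Walk.cons h p) x y = (if x = u ∧ y = c then 1 else 0) + cnt p x y := rfl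

lemma cnt_adj {G : SimpleGraph V} {u v x y : V} (w : G.Walk u v) (h : 0 < cnt w x y) :
    G.Adj x y ∧ x ∈ w.support ∧ y ∈ w.support := by
  induction w with
  | nil => exact absurd h (by simp [cnt])
  | @cons a b c hadj p ih =>
    rw [cnt_cons] at h
    by_cases hxy : x = a ∧ y = b
    · obtain ⟨hx, hy⟩ := hxy
      subst hx; subst hy
      exact ⟨hadj, by simp, by simp [SimpleGraph.Walk.start_mem_support]⟩
    · simp [hxy] at h
      obtain ⟨ha, hs1, hs2⟩ := ih h
      exact ⟨ha, by simp [hs1], by simp [hs2]⟩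

lemma cnt_le_length {G : SimpleGraph V} {u v x y : V} (w : G.Walk u v) :
    cnt w x y ≤ w.length := by
  induction w with
  | nil => simp
  | @cons a b c hadj p ih =>
    rw [cnt_cons, SimpleGraph.Walk.length_cons]
    by_cases hxy : x = a ∧ y = b
    · obtain ⟨rfl, rfl⟩ := hxy; simp; omega
    · simp [hxy]; omega

lemma cnt_edges_mem {G : SimpleGraph V} {u v x y : V} (w : G.Walk u v) (h : 0 < cnt w x y) :
    s(x, y) ∈ w.edges := by
  induction w with
  | nil => exact absurd h (by simp)
  | @cons a b c hadj p ih =>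
    rw [cnt_cons] at h
    rw [SimpleGraph.Walk.edges_cons]
    by_cases hxy : x = a ∧ y = b
    · obtain ⟨hx, hy⟩ := hxy; subst hx; subst hy; simp
    · simp [hxy] at h
      simp [ih h]

lemma edges_cnt {G : SimpleGraph V} {u v : V} (w : G.Walk u v) {e : Sym2 V} (he : e ∈ w.edges) :
    ∃ x y, e = s(x, y) ∧ 0 < cnt w x y := by
  induction w with
  | nil => exact absurd he (by simp)
  | @cons a b c hadj p ih =>
    rw [SimpleGraph.Walk.edges_cons] at he
    rcases List.mem_cons.mp he with h | h
    · exact ⟨a, b, h, by rw [cnt_cons]; simp⟩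
    · obtain ⟨x, y, hxy, hc⟩ := ih h
      refine ⟨x, y, hxy, ?_⟩
      rw [cnt_cons]
      omega

lemma support_cnt {G : SimpleGraph V} {u v : V} (w : G.Walk u v) {x : V}
    (hx : x ∈ w.support) : x = u ∨ ∃ y, 0 < cnt w y x := by
  induction w with
  | nil => left; simpa using hx
  | @cons a b c hadj p ih =>
    rw [SimpleGraph.Walk.support_cons] at hx
    rcases List.mem_cons.mp hx with h | h
    · left; exact h
    · rcases ih h with h1 | ⟨y, hy⟩
      · right; exact ⟨a, by rw [cnt_cons]; simp [h1]⟩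
      · right; exact ⟨y, by rw [cnt_cons]; omega⟩

lemma cnt_crossing {G : SimpleGraph V} {u v : V} (w : G.Walk u v) {X : Finset V}
    (hu : u ∈ X) (hv : v ∉ X) : ∃ x y, 0 < cnt w x y ∧ x ∈ X ∧ y ∉ X := by
  induction w with
  | nil => exact absurd hu hv
  | @cons a b c hadj p ih =>
    by_cases hb : b ∈ X
    · obtain ⟨x, y, hc, hx, hy⟩ := ih hb hv
      exact ⟨x, y, by rw [cnt_cons]; omega, hx, hy⟩
    · exact ⟨a, b, by rw [cnt_cons]; simp, hu, hb⟩

lemma cnt_concat {G : SimpleGraph V} {u c d x y : V} (w : G.Walk u c) (h : G.Adj c d) :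
    cnt (w.concat h) x y = cnt w x y + (if x = c ∧ y = d then 1 else 0) := by
  induction w with
  | nil => simp [SimpleGraph.Walk.concat_nil, cnt_cons]
  | @cons a b c2 hadj p ih =>
    rw [SimpleGraph.Walk.concat_cons, cnt_cons, ih, cnt_cons]
    omega

lemma exists_cnt_pos {G : SimpleGraph V} {u v : V} (w : G.Walk u v) (h : u ≠ v) :
    ∃ x y, 0 < cnt w x y := by
  cases w with
  | nil => exact absurd rfl h
  | cons hadj p => rename_i b; exact ⟨u, b, by rw [cnt_cons]; simp⟩

lemma reach_walk {G : SimpleGraph V} {r : V → V → Prop} (hr : ∀ x y, r x y → G.Adj x y)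
    {a c : V} (h : Relation.ReflTransGen r a c) :
    ∃ w : G.Walk a c, ∀ x y, 0 < cnt w x y → r x y := by
  induction h with
  | refl => exact ⟨SimpleGraph.Walk.nil, by simp⟩
  | @tail b2 c2 hab hbc ih =>
    obtain ⟨w, hw⟩ := ih
    refine ⟨w.concat (hr _ _ hbc), fun x y hxy => ?_⟩
    rw [cnt_concat] at hxy
    by_cases hc : x = b2 ∧ y = c2
    · obtain ⟨hx, hy⟩ := hc; subst hx; subst hy; exact hbc
    · simp [hc] at hxy
      exact hw _ _ hxy

lemma sum_cnt_sub [Fintype V] {G : SimpleGraph V} {u v : V} (w : G.Walk u v) (x : V) :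
    ∑ y : V, ((cnt w x y : ℝ) - (cnt w y x : ℝ))
      = (if x = u then 1 else 0) - (if x = v then 1 else 0) := by
  induction w with
  | nil => simp
  | @cons a b c hadj p ih =>
    have key : ∀ y : V, ((cnt (SimpleGraph.Walk.cons hadj p) x y : ℝ)
          - cnt (SimpleGraph.Walk.cons hadj p) y x)
        = ((if x = a ∧ y = b then (1:ℝ) else 0) - (if y = a ∧ x = b then 1 else 0))
          + ((cnt p x y : ℝ) - cnt p y x) := by
      intro y; rw [cnt_cons, cnt_cons]; push_cast; ring
    rw [Finset.sum_congr rfl (fun y _ => key y), Finset.sum_add_distrib, ih,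
      Finset.sum_sub_distrib]
    have e1 : ∑ y : V, (if x = a ∧ y = b then (1:ℝ) else 0) = if x = a then 1 else 0 := by
      by_cases h : x = a <;> simp [h]
    have e2 : ∑ y : V, (if y = a ∧ x = b then (1:ℝ) else 0) = if x = b then 1 else 0 := by
      by_cases h : x = b <;> simp [h]
    rw [e1, e2]; ring

/-! ### cutCard lemmas -/

lemma cutCard_comm (G : SimpleGraph V) (X Y : Finset V) : cutCard G X Y = cutCard G Y X := by
  unfold cutCard
  have himg : ((Y ×ˢ X).filter fun ab => G.Adj ab.1 ab.2)
      = ((X ×ˢ Y).filter fun ab => G.Adj ab.1 ab.2).image Prod.swap := by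
    ext ⟨a, b⟩
    simp only [Finset.mem_filter, Finset.mem_product, Finset.mem_image, Prod.exists]
    constructor
    · rintro ⟨⟨ha, hb⟩, hadj⟩
      exact ⟨b, a, ⟨⟨hb, ha⟩, hadj.symm⟩, rfl⟩
    · rintro ⟨x, y, ⟨⟨hx, hy⟩, hadj⟩, heq⟩
      rw [Prod.swap_prod_mk] at heq
      cases heq
      exact ⟨⟨hy, hx⟩, hadj.symm⟩
  rw [himg, Finset.card_image_of_injective _ Prod.swap_injective]

lemma cutCard_union_left (G : SimpleGraph V) {X Y : Finset V} (h : Disjoint X Y)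
    (Z : Finset V) : cutCard G (X ∪ Y) Z = cutCard G X Z + cutCard G Y Z := by
  unfold cutCard
  rw [Finset.union_product, Finset.filter_union]
  apply Finset.card_union_of_disjoint
  refine Finset.disjoint_left.mpr ?_
  intro ab h1 h2
  simp only [Finset.mem_filter, Finset.mem_product] at h1 h2
  exact (Finset.disjoint_left.mp h) h1.1.1 h2.1.1

lemma cutCard_union_right (G : SimpleGraph V) (X : Finset V) {Y Z : Finset V}
    (h : Disjoint Y Z) : cutCard G X (Y ∪ Z) = cutCard G X Y + cutCard G X Z := by
  rw [cutCard_comm, cutCard_union_left G h, cutCard_comm G Y X, cutCard_comm G Z X]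

lemma mem_bdry {G : SimpleGraph V} {C : Finset V} {v : V} :
    v ∈ bdry G C ↔ v ∈ C ∧ ∃ u, u ∉ C ∧ G.Adj v u := by
  simp [bdry]

lemma bdry_subset {G : SimpleGraph V} {C : Finset V} : bdry G C ⊆ C :=
  fun _ hv => (mem_bdry.mp hv).1

/-! ### Easy direction: a unit flow implies a lower bound on cuts -/

lemma cut_lower [Fintype V] (G : SimpleGraph V) (C S T X : Finset V) (η : ℝ) (hη : 0 ≤ η)
    (hf : HasUnitFlowIn G C S T η) (hSX : S ⊆ X) (hTX : ∀ b ∈ T, b ∉ X) :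
    (S.card : ℝ) ≤ η * cutCard G X (C \ X) := by
  obtain ⟨P, f, hf0, hends, hsupp, hsrc, hsnk, hcong⟩ := hf
  set Ec : Finset (Sym2 V) :=
    ((X ×ˢ (C \ X)).filter fun ab => G.Adj ab.1 ab.2).image fun ab => s(ab.1, ab.2) with hEc
  have hmaps : ∀ p ∈ P, p.1 ∈ S := fun p hp => (hends p hp).1
  have h1 : ∑ p ∈ P, f p = S.card := by
    rw [← Finset.sum_fiberwise_of_maps_to hmaps f]
    rw [Finset.sum_congr rfl (fun a ha => hsrc a ha)]
    simp
  have hex : ∀ p ∈ P, ∃ e ∈ Ec, e ∈ p.2.2.edges := by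
    intro p hp
    obtain ⟨x, y, hcnt, hx, hy⟩ := cnt_crossing p.2.2 (hSX (hends p hp).1) (hTX _ (hends p hp).2)
    obtain ⟨hadj, hxs, hys⟩ := cnt_adj _ hcnt
    refine ⟨s(x, y), ?_, cnt_edges_mem _ hcnt⟩
    refine Finset.mem_image.mpr ⟨(x, y), ?_, rfl⟩
    rw [Finset.mem_filter, Finset.mem_product]
    exact ⟨⟨hx, Finset.mem_sdiff.mpr ⟨hsupp p hp y hys, hy⟩⟩, hadj⟩
  have h3 : ∑ p ∈ P, f p ≤ ∑ e ∈ Ec, ∑ p ∈ P.filter (fun p => e ∈ p.2.2.edges), f p := by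
    have : ∀ e, ∑ p ∈ P.filter (fun p => e ∈ p.2.2.edges), f p
        = ∑ p ∈ P, if e ∈ p.2.2.edges then f p else 0 := fun e => Finset.sum_filter _ _
    rw [Finset.sum_congr rfl (fun e _ => this e), Finset.sum_comm]
    apply Finset.sum_le_sum
    intro p hp
    obtain ⟨e0, he0, he0p⟩ := hex p hp
    calc f p = if e0 ∈ p.2.2.edges then f p else 0 := by rw [if_pos he0p]
    _ ≤ ∑ e ∈ Ec, if e ∈ p.2.2.edges then f p else 0 := by
        apply Finset.single_le_sum (fun e _ => ?_) he0
        by_cases h : e ∈ p.2.2.edges <;> simp [h, hf0 p hp]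
  have h4 : ∑ e ∈ Ec, ∑ p ∈ P.filter (fun p => e ∈ p.2.2.edges), f p ≤ Ec.card * η :=
    by simpa using Finset.sum_le_sum (fun e (_ : e ∈ Ec) => hcong e)
  have h5 : (Ec.card : ℝ) ≤ cutCard G X (C \ X) := by
    exact_mod_cast Nat.cast_le.mpr (Finset.card_image_le)
  calc (S.card : ℝ) = ∑ p ∈ P, f p := h1.symm
  _ ≤ Ec.card * η := le_trans h3 h4
  _ ≤ cutCard G X (C \ X) * η := by
      apply mul_le_mul_of_nonneg_right h5 hη
  _ = η * cutCard G X (C \ X) := mul_comm _ _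

/-! ### The combinatorial core: a lower bound for cuts of `A` -/

lemma key_cut [Fintype V] (G : SimpleGraph V) (C : Finset V) (α ρ : ℝ)
    (hα0 : 0 < α) (hwl : WellLinkedIn G C (bdry G C) α)
    (hρ4 : ρ ≤ 1 / 4)
    (A B : Finset V) (hbal : IsBalancedCut (bdry G C) A B C ρ)
    (hmincut : ∀ A' B' : Finset V, IsBalancedCut (bdry G C) A' B' C ρ →
      cutCard G A B ≤ cutCard G A' B')
    (hAB : (B ∩ bdry G C).card ≤ (A ∩ bdry G C).card)
    (X Y : Finset V) (hXY : X ∪ Y = A) (hd : Disjoint X Y)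
    (hord : ((bdry G C) ∩ X).card ≤ ((bdry G C) ∩ Y).card) :
    α * min (((bdry G A ∩ X).card : ℝ)) (((bdry G A ∩ Y).card : ℝ))
      ≤ (2 + α) * (cutCard G X Y : ℝ) := by
  set Γ : Finset V := bdry G C with hΓ
  have hGC : Γ ⊆ C := bdry_subset
  have hAC : A ⊆ C := by rw [← hbal.1]; exact Finset.subset_union_left
  have hXA : X ⊆ A := by rw [← hXY]; exact Finset.subset_union_left
  have hYA : Y ⊆ A := by rw [← hXY]; exact Finset.subset_union_right
  have hdAB : Disjoint A B := hbal.2.1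
  -- splitting of Γ
  have split1 : (Γ ∩ A).card + (Γ ∩ B).card = Γ.card := by
    rw [← Finset.card_union_of_disjoint
      (Finset.disjoint_of_subset_left Finset.inter_subset_right
        (Finset.disjoint_of_subset_right Finset.inter_subset_right hdAB)),
      ← Finset.inter_union_distrib_left, hbal.1, Finset.inter_eq_left.mpr hGC]
  have split2 : (Γ ∩ X).card + (Γ ∩ Y).card = (Γ ∩ A).card := by
    rw [← Finset.card_union_of_disjoint
      (Finset.disjoint_of_subset_left Finset.inter_subset_right
        (Finset.disjoint_of_subset_right Finset.inter_subset_right hd)),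
      ← Finset.inter_union_distrib_left, hXY]
  -- Y carries at least a ρ fraction of Γ
  have hYρ : ρ * (Γ.card : ℝ) ≤ ((Y ∩ Γ).card : ℝ) := by
    have hABr : ((B ∩ Γ).card : ℝ) ≤ ((A ∩ Γ).card : ℝ) := by exact_mod_cast hAB
    have e1 : ((Γ ∩ A).card : ℝ) + ((Γ ∩ B).card : ℝ) = (Γ.card : ℝ) := by exact_mod_cast split1
    have e2 : ((Γ ∩ X).card : ℝ) + ((Γ ∩ Y).card : ℝ) = ((Γ ∩ A).card : ℝ) := by
      exact_mod_cast split2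
    have e3 : ((Γ ∩ X).card : ℝ) ≤ ((Γ ∩ Y).card : ℝ) := by exact_mod_cast hord
    have e4 : ρ * (Γ.card : ℝ) ≤ (1 / 4) * (Γ.card : ℝ) :=
      mul_le_mul_of_nonneg_right hρ4 (Nat.cast_nonneg _)
    rw [Finset.inter_comm Y Γ]
    rw [Finset.inter_comm A Γ, Finset.inter_comm B Γ] at hABr
    linarith
  -- (Y, X ∪ B) is a ρ-balanced cut
  have hbalY : IsBalancedCut Γ Y (X ∪ B) C ρ := by
    refine ⟨?_, ?_, hYρ, ?_⟩
    · rw [show Y ∪ (X ∪ B) = (X ∪ Y) ∪ B by ext a; simp [Finset.mem_union]; tauto, hXY, hbal.1]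
    · exact Finset.disjoint_union_right.mpr
        ⟨hd.symm, Finset.disjoint_of_subset_left hYA hdAB⟩
    · refine le_trans hbal.2.2.2 ?_
      exact_mod_cast Nat.cast_le.mpr (Finset.card_le_card
        (Finset.inter_subset_inter Finset.subset_union_right (Finset.Subset.refl _)))
  -- minimality gives e(X,B) ≤ e(X,Y)
  have hcut1 : cutCard G A B ≤ cutCard G Y (X ∪ B) := hmincut _ _ hbalY
  have hsplitAB : cutCard G A B = cutCard G X B + cutCard G Y B := by
    rw [← hXY, cutCard_union_left G hd]
  have hsplitY : cutCard G Y (X ∪ B) = cutCard G Y X + cutCard G Y B :=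
    cutCard_union_right G Y (Finset.disjoint_of_subset_left hXA hdAB)
  have hXB_le : cutCard G X B ≤ cutCard G X Y := by
    rw [cutCard_comm G X Y]
    omega
  -- the well-linkedness of Γ gives a lower bound on e(X, C \ X)
  have hGXY : Γ ∩ Y ⊆ Γ \ X := by
    intro a ha
    rw [Finset.mem_inter] at ha
    exact Finset.mem_sdiff.mpr ⟨ha.1, Finset.disjoint_right.mp hd ha.2⟩
  obtain ⟨T0, hT0sub, hT0card⟩ := Finset.exists_subset_card_eq (s := Γ \ X) (n := (Γ ∩ X).card)
    (le_trans hord (Finset.card_le_card hGXY))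
  have hflow : HasUnitFlowIn G C (Γ ∩ X) T0 (1 / α) := by
    apply hwl (Γ ∩ X) T0 Finset.inter_subset_left (hT0sub.trans (Finset.sdiff_subset))
    · refine Finset.disjoint_left.mpr (fun a ha hb => ?_)
      exact (Finset.mem_sdiff.mp (hT0sub hb)).2 (Finset.mem_inter.mp ha).2
    · exact hT0card.symm
  have heasy : ((Γ ∩ X).card : ℝ) ≤ (1 / α) * (cutCard G X (C \ X) : ℝ) := by
    apply cut_lower G C _ _ X (1 / α) (by positivity) hflow
      (Finset.inter_subset_right)
    intro b hb
    exact (Finset.mem_sdiff.mp (hT0sub hb)).2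
  have hCX : C \ X = Y ∪ B := by
    ext a
    simp only [Finset.mem_sdiff, Finset.mem_union]
    constructor
    · intro ⟨haC, haX⟩
      have : a ∈ A ∪ B := hbal.1 ▸ haC
      rcases Finset.mem_union.mp this with h | h
      · left
        rcases Finset.mem_union.mp (hXY ▸ h) with h2 | h2
        · exact absurd h2 haX
        · exact h2
      · right; exact h
    · intro h
      rcases h with h | h
      · exact ⟨hAC (hYA h), Finset.disjoint_right.mp hd h⟩
      · refine ⟨?_, fun hx => Finset.disjoint_left.mp hdAB (hXA hx) h⟩
        rw [← hbal.1]; exact Finset.mem_union_right _ h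
  have heasy2 : α * ((Γ ∩ X).card : ℝ)
      ≤ (cutCard G X Y : ℝ) + (cutCard G X B : ℝ) := by
    have hc : cutCard G X (C \ X) = cutCard G X Y + cutCard G X B := by
      rw [hCX, cutCard_union_right G X (Finset.disjoint_of_subset_left hYA hdAB)]
    rw [hc] at heasy
    rw [mul_comm]
    rw [one_div, inv_mul_eq_div, le_div_iff₀ hα0] at heasy
    exact_mod_cast heasy
  -- |Γ_A ∩ X| ≤ |Γ ∩ X| + e(X,B)
  have hGAX : (bdry G A ∩ X).card ≤ (Γ ∩ X).card + cutCard G X B := by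
    classical
    set W : Finset V := (bdry G A ∩ X) \ Γ with hW
    have hsub : bdry G A ∩ X ⊆ (Γ ∩ X) ∪ W := by
      intro a ha
      by_cases haΓ : a ∈ Γ
      · exact Finset.mem_union_left _
          (Finset.mem_inter.mpr ⟨haΓ, (Finset.mem_inter.mp ha).2⟩)
      · exact Finset.mem_union_right _ (Finset.mem_sdiff.mpr ⟨ha, haΓ⟩)
    have hWmap : ∀ v ∈ W, ∃ u, u ∈ B ∧ G.Adj v u := by
      intro v hv
      rw [hW, Finset.mem_sdiff, Finset.mem_inter] at hv
      obtain ⟨⟨hvb, hvX⟩, hvΓ⟩ := hv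
      obtain ⟨hvA, u, huA, hadj⟩ := mem_bdry.mp hvb
      by_cases huC : u ∈ C
      · have : u ∈ A ∪ B := hbal.1 ▸ huC
        rcases Finset.mem_union.mp this with h | h
        · exact absurd h huA
        · exact ⟨u, h, hadj⟩
      · exact absurd (mem_bdry.mpr ⟨hAC hvA, u, huC, hadj⟩) hvΓ
    have hcardW : W.card ≤ cutCard G X B := by
      set g : V → V × V := fun v =>
        if h : ∃ u, u ∈ B ∧ G.Adj v u then (v, Classical.choose h) else (v, v) with hg
      have hmain : W.card ≤ ((X ×ˢ B).filter (fun ab => G.Adj ab.1 ab.2)).card := by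
        apply Finset.card_le_card_of_injOn g
        · intro v hv
          have h := hWmap v hv
          have hvX : v ∈ X := by
            rw [hW, Finset.mem_coe, Finset.mem_sdiff, Finset.mem_inter] at hv
            exact hv.1.2
          rw [hg]
          simp only [dif_pos h]
          rw [Finset.mem_coe, Finset.mem_filter, Finset.mem_product]
          exact ⟨⟨hvX, (Classical.choose_spec h).1⟩, (Classical.choose_spec h).2⟩
        · intro v1 h1 v2 h2 heq
          rw [hg] at heq
          by_cases e1 : ∃ u, u ∈ B ∧ G.Adj v1 u <;> by_cases e2 : ∃ u, u ∈ B ∧ G.Adj v2 u <;>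
            simp only [dif_pos, dif_neg, e1, e2] at heq <;>
            [skip; skip; skip; skip] <;>
            exact congrArg Prod.fst heq
      exact hmain
    calc (bdry G A ∩ X).card ≤ ((Γ ∩ X) ∪ W).card := Finset.card_le_card hsub
    _ ≤ (Γ ∩ X).card + W.card := Finset.card_union_le _ _
    _ ≤ (Γ ∩ X).card + cutCard G X B := by omega
  -- final arithmetic
  have c1 : min (((bdry G A ∩ X).card : ℝ)) (((bdry G A ∩ Y).card : ℝ))
      ≤ ((bdry G A ∩ X).card : ℝ) := min_le_left _ _
  have c2 : ((bdry G A ∩ X).card : ℝ) ≤ ((Γ ∩ X).card : ℝ) + (cutCard G X B : ℝ) := by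
    exact_mod_cast hGAX
  have c4 : (cutCard G X B : ℝ) ≤ (cutCard G X Y : ℝ) := by exact_mod_cast hXB_le
  have χ1 : α * min (((bdry G A ∩ X).card : ℝ)) (((bdry G A ∩ Y).card : ℝ))
      ≤ α * ((bdry G A ∩ X).card : ℝ) := mul_le_mul_of_nonneg_left c1 hα0.le
  have χ2 : α * ((bdry G A ∩ X).card : ℝ)
      ≤ α * ((Γ ∩ X).card : ℝ) + α * (cutCard G X B : ℝ) := by nlinarith
  have χ3 : α * (cutCard G X B : ℝ) ≤ α * (cutCard G X Y : ℝ) :=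
    mul_le_mul_of_nonneg_left c4 hα0.le
  nlinarith [heasy2]


/-! ### Edge-based flows -/

def vdiv [Fintype V] (f : V → V → ℝ) (x : V) : ℝ := ∑ y, f x y

def Feas [Fintype V] (G : SimpleGraph V) (D S T : Finset V) (η : ℝ) (f : V → V → ℝ) : Prop :=
  (∀ x y, f x y = - f y x) ∧
  (∀ x y, ¬(x ∈ D ∧ y ∈ D ∧ G.Adj x y) → f x y = 0) ∧
  (∀ x y, f x y ≤ η) ∧
  (∀ a ∈ S, vdiv f a ≤ 1) ∧ (∀ a ∈ S, 0 ≤ vdiv f a) ∧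
  (∀ b ∈ T, -1 ≤ vdiv f b) ∧ (∀ b ∈ T, vdiv f b ≤ 0) ∧
  (∀ x, x ∉ S → x ∉ T → vdiv f x = 0)

def flowVal [Fintype V] (S : Finset V) (f : V → V → ℝ) : ℝ := ∑ a ∈ S, vdiv f a

lemma isClosed_setOf_imp {α : Type _} [TopologicalSpace α] {P : Prop} {Q : α → Prop}
    (h : P → IsClosed {x | Q x}) : IsClosed {x | P → Q x} := by
  by_cases hP : P
  · have he : {x | P → Q x} = {x | Q x} := by ext; simp [hP]
    rw [he]; exact h hP
  · have he : {x | P → Q x} = Set.univ := by ext; simp [hP]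
    rw [he]; exact isClosed_univ

lemma feas_max [Fintype V] (G : SimpleGraph V) (D S T : Finset V) (η : ℝ) (hη : 0 ≤ η) :
    ∃ f, Feas G D S T η f ∧ ∀ g, Feas G D S T η g → flowVal S g ≤ flowVal S f := by
  classical
  have ceval : ∀ x y : V, Continuous (fun f : V → V → ℝ => f x y) :=
    fun x y => (continuous_apply y).comp (continuous_apply x)
  have cdiv : ∀ x : V, Continuous (fun f : V → V → ℝ => vdiv f x) :=
    fun x => continuous_finset_sum _ (fun y _ => ceval x y)
  set Fs : Set (V → V → ℝ) := {f | Feas G D S T η f} with hFs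
  have hclosed : IsClosed Fs := by
    have r1 : Fs = (⋂ x, ⋂ y, {f : V → V → ℝ | f x y = - f y x}) ∩
        ((⋂ x, ⋂ y, {f : V → V → ℝ | ¬(x ∈ D ∧ y ∈ D ∧ G.Adj x y) → f x y = 0}) ∩
        ((⋂ x, ⋂ y, {f : V → V → ℝ | f x y ≤ η}) ∩
        ((⋂ a, {f : V → V → ℝ | a ∈ S → vdiv f a ≤ 1}) ∩
        ((⋂ a, {f : V → V → ℝ | a ∈ S → 0 ≤ vdiv f a}) ∩
        ((⋂ b, {f : V → V → ℝ | b ∈ T → -1 ≤ vdiv f b}) ∩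
        ((⋂ b, {f : V → V → ℝ | b ∈ T → vdiv f b ≤ 0}) ∩
        (⋂ x, {f : V → V → ℝ | x ∉ S → x ∉ T → vdiv f x = 0}))))))) := by
      ext f
      simp only [hFs, Feas, Set.mem_setOf_eq, Set.mem_inter_iff, Set.mem_iInter]
    rw [r1]
    refine IsClosed.inter ?_ (IsClosed.inter ?_ (IsClosed.inter ?_ (IsClosed.inter ?_
      (IsClosed.inter ?_ (IsClosed.inter ?_ (IsClosed.inter ?_ ?_))))))
    · exact isClosed_iInter fun x => isClosed_iInter fun y =>
        isClosed_eq (ceval x y) (ceval y x).neg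
    · exact isClosed_iInter fun x => isClosed_iInter fun y =>
        isClosed_setOf_imp fun _ => isClosed_eq (ceval x y) continuous_const
    · exact isClosed_iInter fun x => isClosed_iInter fun y =>
        isClosed_le (ceval x y) continuous_const
    · exact isClosed_iInter fun a =>
        isClosed_setOf_imp fun _ => isClosed_le (cdiv a) continuous_const
    · exact isClosed_iInter fun a =>
        isClosed_setOf_imp fun _ => isClosed_le continuous_const (cdiv a)
    · exact isClosed_iInter fun b =>
        isClosed_setOf_imp fun _ => isClosed_le continuous_const (cdiv b)
    · exact isClosed_iInter fun b =>
        isClosed_setOf_imp fun _ => isClosed_le (cdiv b) continuous_const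
    · exact isClosed_iInter fun x =>
        isClosed_setOf_imp fun _ => isClosed_setOf_imp fun _ =>
          isClosed_eq (cdiv x) continuous_const
  have hsub : Fs ⊆ Metric.closedBall 0 η := by
    intro f hf
    obtain ⟨hskew, _, hcap, _⟩ := hf
    rw [Metric.mem_closedBall, dist_zero_right]
    rw [pi_norm_le_iff_of_nonneg hη]
    intro x
    rw [pi_norm_le_iff_of_nonneg hη]
    intro y
    rw [Real.norm_eq_abs, abs_le]
    constructor
    · have := hcap y x
      rw [hskew y x] at this
      linarith
    · exact hcap x y
  have hcpt : IsCompact Fs :=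
    IsCompact.of_isClosed_subset (isCompact_closedBall _ _) hclosed hsub
  have hne : Fs.Nonempty := by
    refine ⟨0, ?_, ?_, ?_, ?_, ?_, ?_, ?_, ?_⟩ <;>
      simp [vdiv, hη]
  obtain ⟨f, hfFs, hmax⟩ := hcpt.exists_isMaxOn hne
    ((continuous_finset_sum _ fun a _ => cdiv a).continuousOn)
  exact ⟨f, hfFs, fun g hg => hmax hg⟩


lemma vdiv_add_walk [Fintype V] {G : SimpleGraph V} {u v : V} (w : G.Walk u v)
    (f : V → V → ℝ) (δ : ℝ) (x : V) :
    vdiv (fun x y => f x y + δ * ((cnt w x y : ℝ) - (cnt w y x : ℝ))) x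
      = vdiv f x + δ * ((if x = u then 1 else 0) - (if x = v then 1 else 0)) := by
  unfold vdiv
  rw [Finset.sum_add_distrib, ← Finset.mul_sum, sum_cnt_sub]

lemma augment [Fintype V] (G : SimpleGraph V) (D S T : Finset V) (η : ℝ) (hη : 0 < η)
    (hST : Disjoint S T) (f : V → V → ℝ) (hfeas : Feas G D S T η f)
    (a b : V) (haS : a ∈ S) (hbT : b ∈ T) (haU : vdiv f a < 1) (hbU : -1 < vdiv f b)
    (w : G.Walk a b)
    (hw : ∀ x y, 0 < cnt w x y → (x ∈ D ∧ y ∈ D ∧ G.Adj x y ∧ f x y < η)) :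
    ∃ g, Feas G D S T η g ∧ flowVal S f < flowVal S g := by
  obtain ⟨hskew, hsupp, hcap, hσ1, hσ0, hτ1, hτ0, hcons⟩ := hfeas
  have hab : a ≠ b := fun h => Finset.disjoint_left.mp hST haS (h ▸ hbT)
  have hLpos : 0 < w.length := by
    rcases Nat.eq_zero_or_pos w.length with h | h
    · exact absurd (w.eq_of_length_eq_zero h) hab
    · exact h
  set L : ℝ := (w.length : ℝ) with hL
  have hLpos' : (0 : ℝ) < L := by rw [hL]; exact_mod_cast hLpos
  set Pd : Finset (V × V) := (Finset.univ ×ˢ Finset.univ).filter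
    (fun xy => 0 < cnt w xy.1 xy.2) with hPd
  have hPdne : Pd.Nonempty := by
    obtain ⟨x, y, hxy⟩ := exists_cnt_pos w hab
    exact ⟨(x, y), by simp [hPd, hxy]⟩
  set M : ℝ := (Pd.image fun xy => η - f xy.1 xy.2).min' (hPdne.image _) with hM
  have hM0 : 0 < M := by
    rw [hM, Finset.lt_min'_iff]
    intro z hz
    obtain ⟨xy, hxyPd, rfl⟩ := Finset.mem_image.mp hz
    have := hw xy.1 xy.2 (by simpa [hPd] using (Finset.mem_filter.mp hxyPd).2)
    linarith [this.2.2.2]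
  set δ : ℝ := min (min (1 - vdiv f a) (vdiv f b + 1)) (M / L) with hδ
  have hδ0 : 0 < δ := by
    rw [hδ]
    refine lt_min (lt_min (by linarith) (by linarith)) (div_pos hM0 hLpos')
  set g : V → V → ℝ := fun x y => f x y + δ * ((cnt w x y : ℝ) - (cnt w y x : ℝ)) with hg
  have hdivg : ∀ x, vdiv g x
      = vdiv f x + δ * ((if x = a then 1 else 0) - (if x = b then 1 else 0)) :=
    fun x => vdiv_add_walk w f δ x
  have hfeasg : Feas G D S T η g := by
    refine ⟨?_, ?_, ?_, ?_, ?_, ?_, ?_, ?_⟩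
    · intro x y; rw [hg]; simp only; rw [hskew x y]; push_cast; ring
    · intro x y hxy
      have h1 : cnt w x y = 0 := by
        by_contra h
        have h3 := hw x y (Nat.pos_of_ne_zero h)
        exact hxy ⟨h3.1, h3.2.1, h3.2.2.1⟩
      have h2 : cnt w y x = 0 := by
        by_contra h
        have := hw y x (Nat.pos_of_ne_zero h)
        exact hxy ⟨this.2.1, this.1, this.2.2.1.symm⟩
      rw [hg]; simp only [h1, h2, hsupp x y hxy]; norm_num
    · intro x y
      rcases le_or_gt ((cnt w x y : ℝ) - (cnt w y x : ℝ)) 0 with hc | hc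
      · have : δ * ((cnt w x y : ℝ) - (cnt w y x : ℝ)) ≤ 0 :=
          mul_nonpos_of_nonneg_of_nonpos hδ0.le hc
        have := hcap x y
        rw [hg]; simp only; linarith
      · have hcnt : 0 < cnt w x y := by
          by_contra h
          push_neg at h
          interval_cases h2 : cnt w x y
          · simp at hc; linarith [Nat.cast_nonneg (α := ℝ) (cnt w y x)]
        have hmem : (x, y) ∈ Pd := by simp [hPd, hcnt]
        have hMle : M ≤ η - f x y := by
          rw [hM]
          exact Finset.min'_le _ _ (Finset.mem_image_of_mem _ hmem)
        have hcL : ((cnt w x y : ℝ) - (cnt w y x : ℝ)) ≤ L := by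
          have := cnt_le_length (x := x) (y := y) w
          have h2 : (cnt w x y : ℝ) ≤ L := by rw [hL]; exact_mod_cast this
          have h3 : (0:ℝ) ≤ (cnt w y x : ℝ) := Nat.cast_nonneg _
          linarith
        have hδL : δ * ((cnt w x y : ℝ) - (cnt w y x : ℝ)) ≤ M := by
          calc δ * ((cnt w x y : ℝ) - (cnt w y x : ℝ)) ≤ (M / L) * ((cnt w x y : ℝ) - (cnt w y x : ℝ)) := by
                apply mul_le_mul_of_nonneg_right _ hc.le
                rw [hδ]; exact min_le_right _ _
          _ ≤ (M / L) * L := by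
                apply mul_le_mul_of_nonneg_left hcL (div_pos hM0 hLpos').le
          _ = M := div_mul_cancel₀ _ hLpos'.ne'
        rw [hg]; simp only; linarith
    · intro a' ha'
      rw [hdivg]
      by_cases h : a' = a
      · subst h
        rw [if_pos rfl, if_neg hab]
        have : δ ≤ 1 - vdiv f a' := le_trans (min_le_left _ _) (min_le_left _ _)
        linarith
      · have h2 : a' ≠ b := fun hh => Finset.disjoint_left.mp hST ha' (hh ▸ hbT)
        rw [if_neg h, if_neg h2]
        have := hσ1 a' ha'
        linarith
    · intro a' ha'
      rw [hdivg]
      by_cases h : a' = a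
      · subst h
        rw [if_pos rfl, if_neg hab]
        have := hσ0 a' ha'
        linarith
      · have h2 : a' ≠ b := fun hh => Finset.disjoint_left.mp hST ha' (hh ▸ hbT)
        rw [if_neg h, if_neg h2]
        have := hσ0 a' ha'
        linarith
    · intro b' hb'
      rw [hdivg]
      by_cases h : b' = b
      · subst h
        have h2 : b' ≠ a := fun hh => Finset.disjoint_right.mp hST hb' (hh ▸ haS)
        rw [if_pos rfl, if_neg h2]
        have : δ ≤ vdiv f b' + 1 := le_trans (min_le_left _ _) (min_le_right _ _)
        linarith
      · have h2 : b' ≠ a := fun hh => Finset.disjoint_right.mp hST hb' (hh ▸ haS)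
        rw [if_neg h, if_neg h2]
        have := hτ1 b' hb'
        linarith
    · intro b' hb'
      rw [hdivg]
      by_cases h : b' = b
      · subst h
        have h2 : b' ≠ a := fun hh => Finset.disjoint_right.mp hST hb' (hh ▸ haS)
        rw [if_pos rfl, if_neg h2]
        have := hτ0 b' hb'
        linarith
      · have h2 : b' ≠ a := fun hh => Finset.disjoint_right.mp hST hb' (hh ▸ haS)
        rw [if_neg h, if_neg h2]
        have := hτ0 b' hb'
        linarith
    · intro x hxS hxT
      rw [hdivg]
      have h1 : x ≠ a := fun hh => hxS (hh ▸ haS)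
      have h2 : x ≠ b := fun hh => hxT (hh ▸ hbT)
      rw [if_neg h1, if_neg h2]
      rw [hcons x hxS hxT]
      ring
  refine ⟨g, hfeasg, ?_⟩
  unfold flowVal
  rw [Finset.sum_congr rfl (fun x _ => hdivg x), Finset.sum_add_distrib, ← Finset.mul_sum]
  have e1 : ∑ x ∈ S, ((if x = a then (1:ℝ) else 0) - (if x = b then 1 else 0)) = 1 := by
    rw [Finset.sum_sub_distrib, Finset.sum_ite_eq' S a (fun _ => (1:ℝ)),
      Finset.sum_ite_eq' S b (fun _ => (1:ℝ)), if_pos haS,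
      if_neg (Finset.disjoint_right.mp hST hbT)]
    norm_num
  rw [e1]
  linarith


lemma maxflow [Fintype V] (G : SimpleGraph V) (D S T : Finset V) (hS : S ⊆ D)
    (hST : Disjoint S T) (hcard : S.card = T.card) (η : ℝ) (hη : 0 < η)
    (hcut : ∀ X : Finset V, X ⊆ D →
      ((S ∩ X).card : ℝ) ≤ ((T ∩ X).card : ℝ) + η * (cutCard G X (D \ X) : ℝ)) :
    ∃ f, Feas G D S T η f ∧ (∀ a ∈ S, vdiv f a = 1) ∧ (∀ b ∈ T, vdiv f b = -1) := by
  classical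
  obtain ⟨f, hfeas, hmax⟩ := feas_max G D S T η hη.le
  obtain ⟨hskew, hsupp, hcap, hσ1, hσ0, hτ1, hτ0, hcons⟩ := hfeas
  -- the value is at most |S|
  have hvle : flowVal S f ≤ S.card := by
    unfold flowVal
    calc ∑ a ∈ S, vdiv f a ≤ ∑ _a ∈ S, (1:ℝ) := Finset.sum_le_sum hσ1
    _ = S.card := by simp
  -- the value is at least |S|
  have hvge : ¬ flowVal S f < S.card := by
    intro hlt
    -- there is an unsaturated source
    have hexa : ∃ a ∈ S, vdiv f a < 1 := by
      by_contra hno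
      push_neg at hno
      have : (S.card : ℝ) ≤ flowVal S f := by
        unfold flowVal
        calc (S.card : ℝ) = ∑ _a ∈ S, (1:ℝ) := by simp
        _ ≤ ∑ a ∈ S, vdiv f a := Finset.sum_le_sum (fun a ha => hno a ha)
      linarith
    set r : V → V → Prop := fun x y => x ∈ D ∧ y ∈ D ∧ G.Adj x y ∧ f x y < η with hr
    set Rset : Set V := {y | ∃ a ∈ S, vdiv f a < 1 ∧ Relation.ReflTransGen r a y} with hRset
    set R : Finset V := Finset.univ.filter (· ∈ Rset) with hR
    have hmemR : ∀ y, y ∈ R ↔ y ∈ Rset := by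
      intro y; rw [hR]; simp
    have hRD : R ⊆ D := by
      intro y hy
      obtain ⟨a, haS, _, hreach⟩ := (hmemR y).mp hy
      induction hreach with
      | refl => exact hS haS
      | tail _ hstep _ => exact hstep.2.1
    -- every sink in R is saturated
    have hsinkSat : ∀ b ∈ T, b ∈ Rset → vdiv f b = -1 := by
      intro b hbT hbR
      by_contra hne
      have hbgt : -1 < vdiv f b := lt_of_le_of_ne (hτ1 b hbT) (Ne.symm hne)
      obtain ⟨a, haS, haU, hreach⟩ := hbR
      obtain ⟨w, hw⟩ := reach_walk (fun x y h => h.2.2.1) hreach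
      obtain ⟨g, hg, hgv⟩ := augment G D S T η hη hST f
        ⟨hskew, hsupp, hcap, hσ1, hσ0, hτ1, hτ0, hcons⟩ a b haS hbT haU hbgt w
        (fun x y hc => hw x y hc)
      exact absurd (hmax g hg) (not_le.mpr hgv)
    -- every source outside R is saturated
    have hsrcSat : ∀ a ∈ S, a ∉ R → vdiv f a = 1 := by
      intro a haS haR
      by_contra hne
      have h1 : vdiv f a < 1 := lt_of_le_of_ne (hσ1 a haS) hne
      exact haR ((hmemR a).mpr ⟨a, haS, h1, Relation.ReflTransGen.refl⟩)
    -- edges leaving R are saturated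
    have hsat : ∀ x ∈ R, ∀ y ∈ Rᶜ, f x y = if y ∈ D ∧ G.Adj x y then η else 0 := by
      intro x hx y hy
      have hxD : x ∈ D := hRD hx
      by_cases h : y ∈ D ∧ G.Adj x y
      · rw [if_pos h]
        rcases lt_or_ge (f x y) η with hlt2 | hge
        · exfalso
          obtain ⟨a, haS, haU, hreach⟩ := (hmemR x).mp hx
          have : y ∈ Rset := ⟨a, haS, haU, hreach.tail ⟨hxD, h.1, h.2, hlt2⟩⟩
          exact (Finset.mem_compl.mp hy) ((hmemR y).mpr this)
        · exact le_antisymm (hcap x y) hge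
      · rw [if_neg h]
        apply hsupp
        intro hcon
        exact h ⟨hcon.2.1, hcon.2.2⟩
    -- compute the divergence sum over R
    have hdiag : ∑ x ∈ R, ∑ y ∈ R, f x y = 0 := by
      have h1 : ∑ x ∈ R, ∑ y ∈ R, f x y = ∑ y ∈ R, ∑ x ∈ R, f x y := Finset.sum_comm
      have h2 : ∑ y ∈ R, ∑ x ∈ R, f x y = - ∑ y ∈ R, ∑ x ∈ R, f y x := by
        rw [← Finset.sum_neg_distrib]
        apply Finset.sum_congr rfl
        intro y _
        rw [← Finset.sum_neg_distrib]
        apply Finset.sum_congr rfl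
        intro x _
        exact hskew x y
      have h3 : ∑ y ∈ R, ∑ x ∈ R, f y x = ∑ x ∈ R, ∑ y ∈ R, f x y := rfl
      rw [h3] at h2
      rw [h1] at *
      linarith
    have hsumR : ∑ x ∈ R, vdiv f x = η * (cutCard G R (D \ R) : ℝ) := by
      have h0 : ∀ x, vdiv f x = ∑ y ∈ R, f x y + ∑ y ∈ Rᶜ, f x y := by
        intro x
        rw [Finset.sum_add_sum_compl R (f x)]
        rfl
      rw [Finset.sum_congr rfl (fun x _ => h0 x), Finset.sum_add_distrib, hdiag, zero_add]
      have h1 : ∑ x ∈ R, ∑ y ∈ Rᶜ, f x y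
          = ∑ x ∈ R, ∑ y ∈ Rᶜ, (if y ∈ D ∧ G.Adj x y then η else 0) :=
        Finset.sum_congr rfl (fun x hx => Finset.sum_congr rfl (fun y hy => hsat x hx y hy))
      rw [h1]
      have h2 : ∀ x ∈ R, ∑ y ∈ Rᶜ, (if y ∈ D ∧ G.Adj x y then η else 0)
          = η * ((Rᶜ.filter (fun y => y ∈ D ∧ G.Adj x y)).card : ℝ) := by
        intro x _
        rw [← Finset.sum_filter, Finset.sum_const, nsmul_eq_mul, mul_comm]
      rw [Finset.sum_congr rfl h2, ← Finset.mul_sum]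
      have hcount : (cutCard G R (D \ R))
          = ∑ x ∈ R, (Rᶜ.filter (fun y => y ∈ D ∧ G.Adj x y)).card := by
        rw [cutCard]
        rw [Finset.card_eq_sum_card_fiberwise (f := fun ab : V × V => ab.1) (t := R)
          (fun ab hab => by
            exact (Finset.mem_product.mp (Finset.mem_filter.mp hab).1).1)]
        apply Finset.sum_congr rfl
        intro x hx
        apply Finset.card_bij (fun ab _ => ab.2)
        · rintro ⟨a, y⟩ hab
          simp only [Finset.mem_filter, Finset.mem_product, Finset.mem_sdiff] at hab
          obtain ⟨⟨⟨haR, hyD, hyR⟩, hadj⟩, heq⟩ := hab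
          subst heq
          simp only [Finset.mem_filter, Finset.mem_compl]
          exact ⟨hyR, hyD, hadj⟩
        · rintro ⟨a1, y1⟩ h1 ⟨a2, y2⟩ h2 heq
          simp only [Finset.mem_filter, Finset.mem_product, Finset.mem_sdiff] at h1 h2
          simp only at heq
          obtain ⟨_, he1⟩ := h1
          obtain ⟨_, he2⟩ := h2
          simp [Prod.ext_iff, he1, he2, heq]
        · intro y hy
          simp only [Finset.mem_filter, Finset.mem_compl] at hy
          refine ⟨(x, y), ?_, rfl⟩
          simp only [Finset.mem_filter, Finset.mem_product, Finset.mem_sdiff]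
          exact ⟨⟨⟨hx, hy.2.1, hy.1⟩, hy.2.2⟩, trivial⟩
      rw [hcount, Nat.cast_sum]
    -- split the divergence sum over R by membership in S and T
    have hsplit1 : ∑ x ∈ R, vdiv f x
        = ∑ x ∈ R.filter (· ∈ S), vdiv f x + ∑ x ∈ R.filter (· ∉ S), vdiv f x :=
      (Finset.sum_filter_add_sum_filter_not R _ _).symm
    have hsplit2 : ∑ x ∈ R.filter (· ∉ S), vdiv f x = - ((T ∩ R).card : ℝ) := by
      have e1 : ∑ x ∈ R.filter (· ∉ S), vdiv f x
          = ∑ x ∈ (R.filter (· ∉ S)).filter (· ∈ T), vdiv f x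
            + ∑ x ∈ (R.filter (· ∉ S)).filter (· ∉ T), vdiv f x :=
        (Finset.sum_filter_add_sum_filter_not _ _ _).symm
      have e2 : ∑ x ∈ (R.filter (· ∉ S)).filter (· ∉ T), vdiv f x = 0 := by
        apply Finset.sum_eq_zero
        intro x hx
        simp only [Finset.mem_filter] at hx
        exact hcons x hx.1.2 hx.2
      have e3 : (R.filter (· ∉ S)).filter (· ∈ T) = T ∩ R := by
        ext x
        simp only [Finset.mem_filter, Finset.mem_inter]
        constructor
        · rintro ⟨⟨h1, _⟩, h3⟩; exact ⟨h3, h1⟩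
        · rintro ⟨h1, h2⟩
          exact ⟨⟨h2, Finset.disjoint_right.mp hST h1⟩, h1⟩
      have e4 : ∑ x ∈ T ∩ R, vdiv f x = - ((T ∩ R).card : ℝ) := by
        rw [Finset.sum_congr rfl (fun x hx => hsinkSat x (Finset.mem_inter.mp hx).1
          ((hmemR x).mp (Finset.mem_inter.mp hx).2))]
        simp
      rw [e1, e2, e3, e4, add_zero]
    have hsplit3 : ∑ x ∈ R.filter (· ∈ S), vdiv f x
        = flowVal S f - ((S.card : ℝ) - ((S ∩ R).card : ℝ)) := by
      have e1 : flowVal S f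
          = ∑ x ∈ S.filter (· ∈ R), vdiv f x + ∑ x ∈ S.filter (· ∉ R), vdiv f x :=
        (Finset.sum_filter_add_sum_filter_not S _ _).symm
      have e2 : ∑ x ∈ S.filter (· ∉ R), vdiv f x = ((S.filter (· ∉ R)).card : ℝ) := by
        rw [Finset.sum_congr rfl (fun x hx => hsrcSat x (Finset.mem_filter.mp hx).1
          (Finset.mem_filter.mp hx).2)]
        simp
      have e3 : S.filter (· ∈ R) = S ∩ R := Finset.filter_mem_eq_inter
      have e4 : R.filter (· ∈ S) = S ∩ R := by
        ext x
        simp only [Finset.mem_filter, Finset.mem_inter]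
        tauto
      have e5 : (S.filter (· ∉ R)).card = S.card - (S ∩ R).card := by
        have := Finset.card_filter_add_card_filter_not (s := S) (· ∈ R)
        rw [e3] at this
        omega
      have e6 : (S ∩ R).card ≤ S.card := Finset.card_le_card Finset.inter_subset_left
      rw [e4, e1, e3, e2, e5]
      push_cast [e6]
      ring
    have hfin := hcut R hRD
    rw [hsplit1, hsplit2, hsplit3] at hsumR
    have hSR : ((S ∩ R).card : ℝ) ≤ ((T ∩ R).card : ℝ) + η * (cutCard G R (D \ R) : ℝ) := hfin
    linarith
  have hval : flowVal S f = S.card := le_antisymm hvle (not_lt.mp hvge)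
  -- saturation of the sources
  have hsatS : ∀ a ∈ S, vdiv f a = 1 := by
    intro a haS
    by_contra hne
    have h1 : vdiv f a < 1 := lt_of_le_of_ne (hσ1 a haS) hne
    have : flowVal S f < ∑ _a ∈ S, (1:ℝ) := by
      apply Finset.sum_lt_sum (fun i hi => hσ1 i hi) ⟨a, haS, h1⟩
    rw [hval] at this
    simp at this
  -- total divergence is zero
  have htot : ∑ x : V, vdiv f x = 0 := by
    unfold vdiv
    have h1 : ∑ x : V, ∑ y : V, f x y = ∑ y : V, ∑ x : V, f x y := Finset.sum_comm
    have h2 : ∑ y : V, ∑ x : V, f x y = - ∑ y : V, ∑ x : V, f y x := by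
      rw [← Finset.sum_neg_distrib]
      exact Finset.sum_congr rfl fun y _ => by
        rw [← Finset.sum_neg_distrib]
        exact Finset.sum_congr rfl fun x _ => hskew x y
    have h3 : ∑ y : V, ∑ x : V, f y x = ∑ x : V, ∑ y : V, f x y := rfl
    rw [h3] at h2
    rw [h1] at *
    linarith
  -- saturation of the sinks
  have hTsum : ∑ b ∈ T, vdiv f b = - (T.card : ℝ) := by
    have e1 : ∑ x : V, vdiv f x
        = ∑ x ∈ Finset.univ.filter (· ∈ S), vdiv f x
          + ∑ x ∈ Finset.univ.filter (· ∉ S), vdiv f x :=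
      (Finset.sum_filter_add_sum_filter_not _ _ _).symm
    have e2 : Finset.univ.filter (· ∈ S) = S := by simp
    have e3 : ∑ x ∈ Finset.univ.filter (· ∉ S), vdiv f x
        = ∑ x ∈ (Finset.univ.filter (· ∉ S)).filter (· ∈ T), vdiv f x
          + ∑ x ∈ (Finset.univ.filter (· ∉ S)).filter (· ∉ T), vdiv f x :=
      (Finset.sum_filter_add_sum_filter_not _ _ _).symm
    have e4 : ∑ x ∈ (Finset.univ.filter (· ∉ S)).filter (· ∉ T), vdiv f x = 0 := by
      apply Finset.sum_eq_zero
      intro x hx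
      simp only [Finset.mem_filter] at hx
      exact hcons x hx.1.2 hx.2
    have e5 : (Finset.univ.filter (· ∉ S)).filter (· ∈ T) = T := by
      ext x
      simp only [Finset.mem_filter, Finset.mem_univ, true_and]
      constructor
      · rintro ⟨_, h⟩; exact h
      · intro h; exact ⟨Finset.disjoint_right.mp hST h, h⟩
    have : flowVal S f + ∑ x ∈ T, vdiv f x = 0 := by
      rw [← e5, ← e4]
      have := htot
      rw [e1, e2, e3] at this
      unfold flowVal
      linarith
    rw [hval, hcard] at this
    linarith
  have hsatT : ∀ b ∈ T, vdiv f b = -1 := by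
    intro b hbT
    by_contra hne
    have h1 : -1 < vdiv f b := lt_of_le_of_ne (hτ1 b hbT) (Ne.symm hne)
    have : ∑ _b ∈ T, (-1 : ℝ) < ∑ b ∈ T, vdiv f b :=
      Finset.sum_lt_sum (fun i hi => hτ1 i hi) ⟨b, hbT, h1⟩
    rw [hTsum] at this
    simp at this
  exact ⟨f, ⟨hskew, hsupp, hcap, hσ1, hσ0, hτ1, hτ0, hcons⟩, hsatS, hsatT⟩


def netdiv [Fintype V] (h : V → V → ℝ) (x : V) : ℝ := ∑ y, (h x y - h y x)

lemma netdiv_total [Fintype V] (h : V → V → ℝ) : ∑ x : V, netdiv h x = 0 := by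
  unfold netdiv
  rw [Finset.sum_congr rfl (fun (x : V) _ => (Finset.sum_sub_distrib
    (f := fun y => h x y) (g := fun y => h y x))), Finset.sum_sub_distrib]
  have h2 : ∑ x : V, ∑ y : V, h y x = ∑ x : V, ∑ y : V, h x y := Finset.sum_comm
  rw [h2]
  ring

lemma netdiv_sub_walk [Fintype V] {G : SimpleGraph V} {u v : V} (w : G.Walk u v)
    (h : V → V → ℝ) (δ : ℝ) (x : V) :
    netdiv (fun x y => h x y - δ * (cnt w x y : ℝ)) x
      = netdiv h x - δ * ((if x = u then 1 else 0) - (if x = v then 1 else 0)) := by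
  unfold netdiv
  rw [← sum_cnt_sub w x, Finset.mul_sum, ← Finset.sum_sub_distrib]
  apply Finset.sum_congr rfl
  intro y _
  ring

lemma decomp [Fintype V] (G : SimpleGraph V) (D : Finset V) :
    ∀ (n : ℕ) (h : V → V → ℝ) (s t : V → ℝ),
    (∀ x y, 0 ≤ h x y) →
    (∀ x y, h x y ≠ 0 → x ∈ D ∧ y ∈ D ∧ G.Adj x y) →
    (∀ x, 0 ≤ s x) → (∀ x, 0 ≤ t x) →
    (∀ x, 0 < s x → x ∈ D) →
    (∀ x, ¬(0 < s x ∧ 0 < t x)) →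
    (∀ x, netdiv h x = s x - t x) →
    ((Finset.univ ×ˢ Finset.univ).filter (fun xy : V × V => h xy.1 xy.2 ≠ 0)).card
      + (Finset.univ.filter (fun x => 0 < s x)).card
      + (Finset.univ.filter (fun x => 0 < t x)).card ≤ n →
    ∃ (P : Finset (Σ u v : V, G.Walk u v)) (wt : (Σ u v : V, G.Walk u v) → ℝ),
      (∀ p ∈ P, 0 ≤ wt p) ∧
      (∀ p ∈ P, 0 < s p.1 ∧ 0 < t p.2.1) ∧
      (∀ p ∈ P, ∀ x ∈ p.2.2.support, x ∈ D) ∧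
      (∀ a, ∑ p ∈ P.filter (fun p => p.1 = a), wt p = s a) ∧
      (∀ b, ∑ p ∈ P.filter (fun p => p.2.1 = b), wt p = t b) ∧
      (∀ x y, ∑ p ∈ P, wt p * (cnt p.2.2 x y : ℝ) ≤ h x y) := by
  classical
  intro n
  induction n with
  | zero =>
    intro h s t hh0 hhD hs0 ht0 hsD hst hdiv hμ
    by_cases hex : ∃ a, 0 < s a
    · exfalso
      obtain ⟨a, ha⟩ := hex
      have : a ∈ Finset.univ.filter (fun x => 0 < s x) := by simp [ha]
      have := Finset.card_pos.mpr ⟨a, this⟩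
      omega
    · push_neg at hex
      have hs : ∀ x, s x = 0 := fun x => le_antisymm (hex x) (hs0 x)
      have hts : ∑ x : V, t x = 0 := by
        have h1 : ∑ x : V, (s x - t x) = 0 := by
          rw [← Finset.sum_congr rfl (fun x _ => hdiv x), netdiv_total]
        have h2 : ∑ x : V, s x = 0 := Finset.sum_eq_zero (fun x _ => hs x)
        rw [Finset.sum_sub_distrib, h2] at h1
        linarith
      have ht : ∀ x, t x = 0 := by
        intro x
        by_contra hne
        have hx : 0 < t x := lt_of_le_of_ne (ht0 x) (Ne.symm hne)
        have : 0 < ∑ x : V, t x := by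
          apply Finset.sum_pos' (fun i _ => ht0 i) ⟨x, Finset.mem_univ x, hx⟩
        linarith
      refine ⟨∅, fun _ => 0, by simp, by simp, by simp, ?_, ?_, ?_⟩
      · intro a; simp [hs a]
      · intro b; simp [ht b]
      · intro x y; simpa using hh0 x y
  | succ n ih =>
    intro h s t hh0 hhD hs0 ht0 hsD hst hdiv hμ
    by_cases hex : ∃ a, 0 < s a
    swap
    · push_neg at hex
      have hs : ∀ x, s x = 0 := fun x => le_antisymm (hex x) (hs0 x)
      have hts : ∑ x : V, t x = 0 := by
        have h1 : ∑ x : V, (s x - t x) = 0 := by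
          rw [← Finset.sum_congr rfl (fun x _ => hdiv x), netdiv_total]
        have h2 : ∑ x : V, s x = 0 := Finset.sum_eq_zero (fun x _ => hs x)
        rw [Finset.sum_sub_distrib, h2] at h1
        linarith
      have ht : ∀ x, t x = 0 := by
        intro x
        by_contra hne
        have hx : 0 < t x := lt_of_le_of_ne (ht0 x) (Ne.symm hne)
        have : 0 < ∑ x : V, t x := by
          apply Finset.sum_pos' (fun i _ => ht0 i) ⟨x, Finset.mem_univ x, hx⟩
        linarith
      refine ⟨∅, fun _ => 0, by simp, by simp, by simp, ?_, ?_, ?_⟩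
      · intro a; simp [hs a]
      · intro b; simp [ht b]
      · intro x y; simpa using hh0 x y
    obtain ⟨a, ha⟩ := hex
    -- the set of vertices reachable from `a` along positive flow
    set r : V → V → Prop := fun x y => 0 < h x y with hrdef
    set Z : Finset V := Finset.univ.filter (fun y => Relation.ReflTransGen r a y) with hZ
    have haZ : a ∈ Z := by
      simp only [hZ, Finset.mem_filter, Finset.mem_univ, true_and]
      exact Relation.ReflTransGen.refl
    -- there is a positive sink in Z
    have hexb : ∃ b ∈ Z, 0 < t b := by
      by_contra hno
      push_neg at hno
      have hZt : ∀ x ∈ Z, t x = 0 := fun x hx => le_antisymm (hno x hx) (ht0 x)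
      have hlow : 0 < ∑ x ∈ Z, netdiv h x := by
        have h1 : ∑ x ∈ Z, netdiv h x = ∑ x ∈ Z, s x := by
          rw [Finset.sum_congr rfl (fun x hx => hdiv x)]
          rw [Finset.sum_sub_distrib]
          rw [Finset.sum_congr rfl hZt]
          simp
        rw [h1]
        exact Finset.sum_pos' (fun i _ => hs0 i) ⟨a, haZ, ha⟩
      have hup : ∑ x ∈ Z, netdiv h x ≤ 0 := by
        have hsplit : ∀ x, netdiv h x
            = ∑ y ∈ Z, (h x y - h y x) + ∑ y ∈ Zᶜ, (h x y - h y x) := by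
          intro x
          rw [Finset.sum_add_sum_compl Z (fun y => h x y - h y x)]
          rfl
        have hdiag : ∑ x ∈ Z, ∑ y ∈ Z, (h x y - h y x) = 0 := by
          rw [Finset.sum_congr rfl (fun x (_ : x ∈ Z) => (Finset.sum_sub_distrib
            (f := fun y => h x y) (g := fun y => h y x))), Finset.sum_sub_distrib]
          have h2 : ∑ x ∈ Z, ∑ y ∈ Z, h y x = ∑ x ∈ Z, ∑ y ∈ Z, h x y := Finset.sum_comm
          rw [h2]
          ring
        rw [Finset.sum_congr rfl (fun x _ => hsplit x), Finset.sum_add_distrib, hdiag,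
          zero_add]
        apply Finset.sum_nonpos
        intro x hx
        apply Finset.sum_nonpos
        intro y hy
        have hzero : h x y = 0 := by
          by_contra hne
          have hpos : 0 < h x y := lt_of_le_of_ne (hh0 x y) (Ne.symm hne)
          have hxZ : Relation.ReflTransGen r a x := by
            simpa [hZ] using hx
          have : y ∈ Z := by
            simp only [hZ, Finset.mem_filter, Finset.mem_univ, true_and]
            exact hxZ.tail hpos
          exact (Finset.mem_compl.mp hy) this
        rw [hzero]
        simp [hh0 y x]
      linarith
    obtain ⟨b, hbZ, hbt⟩ := hexb
    have hab : a ≠ b := by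
      intro hh
      exact hst a ⟨ha, hh ▸ hbt⟩
    -- obtain a walk from a to b along positive flow
    have hreach : Relation.ReflTransGen r a b := by simpa [hZ] using hbZ
    obtain ⟨w, hw⟩ := reach_walk
      (fun x y hxy => (hhD x y (ne_of_gt hxy)).2.2) hreach
    have hwpos : ∀ x y, 0 < cnt w x y → 0 < h x y := fun x y hc => hw x y hc
    -- choose δ
    set Pd : Finset (V × V) := (Finset.univ ×ˢ Finset.univ).filter
      (fun xy => 0 < cnt w xy.1 xy.2) with hPd
    have hPdne : Pd.Nonempty := by
      obtain ⟨x, y, hxy⟩ := exists_cnt_pos w hab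
      exact ⟨(x, y), by simp [hPd, hxy]⟩
    set Mr : ℝ := (Pd.image fun xy => h xy.1 xy.2 / (cnt w xy.1 xy.2 : ℝ)).min'
      (hPdne.image _) with hMr
    have hMr0 : 0 < Mr := by
      rw [hMr, Finset.lt_min'_iff]
      intro z hz
      obtain ⟨xy, hxyPd, rfl⟩ := Finset.mem_image.mp hz
      have hc : 0 < cnt w xy.1 xy.2 := by simpa [hPd] using (Finset.mem_filter.mp hxyPd).2
      exact div_pos (hwpos _ _ hc) (by exact_mod_cast hc)
    set δ : ℝ := min (min (s a) (t b)) Mr with hδ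
    have hδ0 : 0 < δ := lt_min (lt_min ha hbt) hMr0
    have hδs : δ ≤ s a := le_trans (min_le_left _ _) (min_le_left _ _)
    have hδt : δ ≤ t b := le_trans (min_le_left _ _) (min_le_right _ _)
    have hδM : δ ≤ Mr := min_le_right _ _
    have hδcnt : ∀ x y, 0 < cnt w x y → δ * (cnt w x y : ℝ) ≤ h x y := by
      intro x y hc
      have hmem : (x, y) ∈ Pd := by simp [hPd, hc]
      have : Mr ≤ h x y / (cnt w x y : ℝ) :=
        Finset.min'_le _ _ (Finset.mem_image_of_mem _ hmem)
      have hcpos : (0:ℝ) < (cnt w x y : ℝ) := by exact_mod_cast hc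
      rw [le_div_iff₀ hcpos] at this
      calc δ * (cnt w x y : ℝ) ≤ Mr * (cnt w x y : ℝ) :=
            mul_le_mul_of_nonneg_right hδM hcpos.le
      _ ≤ h x y := this
    -- the new data
    set h' : V → V → ℝ := fun x y => h x y - δ * (cnt w x y : ℝ) with hh'
    set s' : V → ℝ := fun x => s x - (if x = a then δ else 0) with hs'
    set t' : V → ℝ := fun x => t x - (if x = b then δ else 0) with ht'
    have hh'0 : ∀ x y, 0 ≤ h' x y := by
      intro x y
      rw [hh']
      rcases Nat.eq_zero_or_pos (cnt w x y) with hc | hc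
      · simp [hc, hh0 x y]
      · simp only
        linarith [hδcnt x y hc]
    have hh'sub : ∀ x y, h' x y ≠ 0 → h x y ≠ 0 := by
      intro x y hne hzz
      have hc : cnt w x y = 0 := by
        by_contra hcc
        have := hwpos x y (Nat.pos_of_ne_zero hcc)
        rw [hzz] at this
        linarith
      apply hne
      simp only [hh', hzz, hc]
      simp
    have hs'0 : ∀ x, 0 ≤ s' x := by
      intro x
      simp only [hs']
      by_cases hxa : x = a
      · rw [if_pos hxa, hxa]; linarith
      · rw [if_neg hxa]; linarith [hs0 x]
    have ht'0 : ∀ x, 0 ≤ t' x := by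
      intro x
      simp only [ht']
      by_cases hxb : x = b
      · rw [if_pos hxb, hxb]; linarith
      · rw [if_neg hxb]; linarith [ht0 x]
    have hs'le : ∀ x, s' x ≤ s x := by
      intro x
      simp only [hs']
      by_cases hxa : x = a <;> simp [hxa] <;> linarith [hδ0]
    have ht'le : ∀ x, t' x ≤ t x := by
      intro x
      simp only [ht']
      by_cases hxb : x = b <;> simp [hxb] <;> linarith [hδ0]
    have hdiv' : ∀ x, netdiv h' x = s' x - t' x := by
      intro x
      simp only [hh']
      rw [netdiv_sub_walk w h δ x, hdiv x]
      simp only [hs', ht', mul_sub, mul_ite, mul_one, mul_zero]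
      ring
    -- the measure decreases
    have hsubSh : ∀ xy : V × V, h' xy.1 xy.2 ≠ 0 → h xy.1 xy.2 ≠ 0 :=
      fun xy => hh'sub xy.1 xy.2
    have hcard1 : ((Finset.univ ×ˢ Finset.univ).filter
        (fun xy : V × V => h' xy.1 xy.2 ≠ 0)).card
        ≤ ((Finset.univ ×ˢ Finset.univ).filter (fun xy : V × V => h xy.1 xy.2 ≠ 0)).card := by
      apply Finset.card_le_card
      intro xy hxy
      rw [Finset.mem_filter] at *
      exact ⟨hxy.1, hsubSh xy hxy.2⟩
    have hcard2 : (Finset.univ.filter (fun x => 0 < s' x)).card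
        ≤ (Finset.univ.filter (fun x => 0 < s x)).card := by
      apply Finset.card_le_card
      intro x hx
      rw [Finset.mem_filter] at *
      exact ⟨hx.1, lt_of_lt_of_le hx.2 (hs'le x)⟩
    have hcard3 : (Finset.univ.filter (fun x => 0 < t' x)).card
        ≤ (Finset.univ.filter (fun x => 0 < t x)).card := by
      apply Finset.card_le_card
      intro x hx
      rw [Finset.mem_filter] at *
      exact ⟨hx.1, lt_of_lt_of_le hx.2 (ht'le x)⟩
    have hstrict : ((Finset.univ ×ˢ Finset.univ).filter
          (fun xy : V × V => h' xy.1 xy.2 ≠ 0)).card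
        + (Finset.univ.filter (fun x => 0 < s' x)).card
        + (Finset.univ.filter (fun x => 0 < t' x)).card
        < ((Finset.univ ×ˢ Finset.univ).filter (fun xy : V × V => h xy.1 xy.2 ≠ 0)).card
        + (Finset.univ.filter (fun x => 0 < s x)).card
        + (Finset.univ.filter (fun x => 0 < t x)).card := by
      have hchoice : δ = s a ∨ δ = t b ∨ δ = Mr := by
        rcases min_choice (min (s a) (t b)) Mr with h1 | h1
        · rcases min_choice (s a) (t b) with h2 | h2
          · left; rw [hδ, h1, h2]
          · right; left; rw [hδ, h1, h2]
        · right; right; rw [hδ, h1]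
      rcases hchoice with hc | hc | hc
      · have : (Finset.univ.filter (fun x => 0 < s' x)).card
            < (Finset.univ.filter (fun x => 0 < s x)).card := by
          apply Finset.card_lt_card
          rw [Finset.ssubset_iff_of_subset]
          · refine ⟨a, by simp [ha], ?_⟩
            simp only [Finset.mem_filter, Finset.mem_univ, true_and, not_lt, hs']
            rw [if_pos trivial]
            linarith
          · intro x hx
            rw [Finset.mem_filter] at *
            exact ⟨hx.1, lt_of_lt_of_le hx.2 (hs'le x)⟩
        omega
      · have : (Finset.univ.filter (fun x => 0 < t' x)).card
            < (Finset.univ.filter (fun x => 0 < t x)).card := by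
          apply Finset.card_lt_card
          rw [Finset.ssubset_iff_of_subset]
          · refine ⟨b, by simp [hbt], ?_⟩
            simp only [Finset.mem_filter, Finset.mem_univ, true_and, not_lt, ht']
            rw [if_pos trivial]
            linarith
          · intro x hx
            rw [Finset.mem_filter] at *
            exact ⟨hx.1, lt_of_lt_of_le hx.2 (ht'le x)⟩
        omega
      · obtain ⟨xy0, hxy0Pd, hxy0⟩ : ∃ xy ∈ Pd, h xy.1 xy.2 / (cnt w xy.1 xy.2 : ℝ) = Mr := by
          have := Finset.min'_mem (Pd.image fun xy => h xy.1 xy.2 / (cnt w xy.1 xy.2 : ℝ))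
            (hPdne.image _)
          rw [← hMr] at this
          obtain ⟨xy, hxy, heq⟩ := Finset.mem_image.mp this
          exact ⟨xy, hxy, heq⟩
        have hcpos : 0 < cnt w xy0.1 xy0.2 := by
          simpa [hPd] using (Finset.mem_filter.mp hxy0Pd).2
        have hcpos' : (0:ℝ) < (cnt w xy0.1 xy0.2 : ℝ) := by exact_mod_cast hcpos
        have hzero : h' xy0.1 xy0.2 = 0 := by
          rw [hh']
          simp only
          rw [hc, ← hxy0, div_mul_cancel₀ _ hcpos'.ne']
          ring
        have hpos : h xy0.1 xy0.2 ≠ 0 := ne_of_gt (hwpos _ _ hcpos)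
        have : ((Finset.univ ×ˢ Finset.univ).filter
              (fun xy : V × V => h' xy.1 xy.2 ≠ 0)).card
            < ((Finset.univ ×ˢ Finset.univ).filter
              (fun xy : V × V => h xy.1 xy.2 ≠ 0)).card := by
          apply Finset.card_lt_card
          rw [Finset.ssubset_iff_of_subset]
          · refine ⟨xy0, ?_, ?_⟩
            · simp only [Finset.mem_filter, Finset.mem_product]
              exact ⟨⟨Finset.mem_univ _, Finset.mem_univ _⟩, hpos⟩
            · simp only [Finset.mem_filter, not_and, not_not]
              intro _
              exact hzero
          · intro xy hxy
            rw [Finset.mem_filter] at *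
            exact ⟨hxy.1, hsubSh xy hxy.2⟩
        omega
    -- recurse
    obtain ⟨P', wt', hw0, hwst, hwD, hwa, hwb, hwcong⟩ := ih h' s' t' hh'0
      (fun x y hne => hhD x y (hh'sub x y hne)) hs'0 ht'0
      (fun x hx => hsD x (lt_of_lt_of_le hx (hs'le x)))
      (fun x hx => hst x ⟨lt_of_lt_of_le hx.1 (hs'le x), lt_of_lt_of_le hx.2 (ht'le x)⟩)
      hdiv' (by omega)
    set p0 : (Σ u v : V, G.Walk u v) := ⟨a, b, w⟩ with hp0
    set P : Finset (Σ u v : V, G.Walk u v) := insert p0 P' with hP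
    set wt : (Σ u v : V, G.Walk u v) → ℝ :=
      fun p => (if p = p0 then δ else 0) + (if p ∈ P' then wt' p else 0) with hwt
    have hP'sub : P' ⊆ P := Finset.subset_insert _ _
    have hsplitsum : ∀ (c : (Σ u v : V, G.Walk u v) → Prop),
        ∑ p ∈ P.filter (fun p => c p), wt p
          = (if c p0 then δ else 0) + ∑ p ∈ P'.filter (fun p => c p), wt' p := by
      intro c
      rw [hwt]
      rw [Finset.sum_add_distrib]
      congr 1
      · rw [Finset.sum_ite_eq' (P.filter (fun p => c p)) p0 (fun _ => δ)]
        by_cases hcp : c p0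
        · rw [if_pos hcp, if_pos (Finset.mem_filter.mpr ⟨Finset.mem_insert_self _ _, hcp⟩)]
        · rw [if_neg hcp, if_neg (fun hmem => hcp (Finset.mem_filter.mp hmem).2)]
      · rw [Finset.sum_ite_mem]
        congr 1
        ext p
        simp only [Finset.mem_inter, Finset.mem_filter, hP, Finset.mem_insert]
        constructor
        · rintro ⟨⟨_, hc⟩, hmem⟩; exact ⟨hmem, hc⟩
        · rintro ⟨hmem, hc⟩; exact ⟨⟨Or.inr hmem, hc⟩, hmem⟩
    refine ⟨P, wt, ?_, ?_, ?_, ?_, ?_, ?_⟩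
    · intro p hp
      rw [hwt]
      have h1 : 0 ≤ (if p = p0 then δ else 0) := by
        by_cases hpp : p = p0 <;> simp [hpp, hδ0.le]
      have h2 : 0 ≤ (if p ∈ P' then wt' p else 0) := by
        by_cases hpp : p ∈ P' <;> simp [hpp]
        exact hw0 p hpp
      exact add_nonneg h1 h2
    · intro p hp
      rcases Finset.mem_insert.mp hp with hpp | hpp
      · subst hpp
        exact ⟨ha, hbt⟩
      · have := hwst p hpp
        exact ⟨lt_of_lt_of_le this.1 (hs'le _), lt_of_lt_of_le this.2 (ht'le _)⟩
    · intro p hp x hx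
      rcases Finset.mem_insert.mp hp with hpp | hpp
      · subst hpp
        rcases support_cnt w hx with h1 | ⟨y, hy⟩
        · exact h1 ▸ hsD a ha
        · exact (hhD y x (ne_of_gt (hwpos y x hy))).2.1
      · exact hwD p hpp x hx
    · intro a'
      rw [hsplitsum (fun p => p.1 = a'), hwa a']
      simp only [hp0, hs']
      by_cases haa : a = a'
      · subst haa
        simp
      · rw [if_neg haa, if_neg (fun hh : a' = a => haa hh.symm)]
        ring
    · intro b'
      rw [hsplitsum (fun p => p.2.1 = b'), hwb b']
      simp only [hp0, ht']
      by_cases hbb : b = b'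
      · subst hbb
        rw [if_pos (show p0.snd.fst = b from rfl)]; ring
      · rw [if_neg hbb, if_neg (fun hh : b' = b => hbb hh.symm)]
        ring
    · intro x y
      have h2 := hwcong x y
      have hsum : ∑ p ∈ P, wt p * (cnt p.2.2 x y : ℝ)
          = δ * (cnt w x y : ℝ) + ∑ p ∈ P', wt' p * (cnt p.2.2 x y : ℝ) := by
        rw [hwt]
        simp only [add_mul]
        rw [Finset.sum_add_distrib]
        congr 1
        · simp only [ite_mul, zero_mul]
          rw [Finset.sum_ite_eq' P p0 (fun p => δ * (cnt p.2.2 x y : ℝ)),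
            if_pos (Finset.mem_insert_self _ _)]
        · simp only [ite_mul, zero_mul]
          rw [Finset.sum_ite_mem, Finset.inter_eq_right.mpr hP'sub]
      rw [hsum]
      have h3 : h' x y = h x y - δ * (cnt w x y : ℝ) := by simp only [hh']
      linarith


lemma exists_flow [Fintype V] (G : SimpleGraph V) (D S T : Finset V) (hS : S ⊆ D)
    (hT : T ⊆ D) (hST : Disjoint S T) (hcard : S.card = T.card) (η : ℝ) (hη : 0 < η)
    (hcut : ∀ X : Finset V, X ⊆ D →
      ((S ∩ X).card : ℝ) ≤ ((T ∩ X).card : ℝ) + η * (cutCard G X (D \ X) : ℝ)) :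
    HasUnitFlowIn G D S T η := by
  classical
  obtain ⟨f, ⟨hskew, hsupp, hcap, _, _, _, _, hcons⟩, hsatS, hsatT⟩ :=
    maxflow G D S T hS hST hcard η hη hcut
  set h : V → V → ℝ := fun x y => max (f x y) 0 with hh
  set s : V → ℝ := fun x => if x ∈ S then 1 else 0 with hs
  set t : V → ℝ := fun x => if x ∈ T then 1 else 0 with ht
  have hh0 : ∀ x y, 0 ≤ h x y := fun x y => le_max_right _ _
  have hhD : ∀ x y, h x y ≠ 0 → x ∈ D ∧ y ∈ D ∧ G.Adj x y := by
    intro x y hne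
    by_contra hnc
    exact hne (by simp only [hh]; rw [hsupp x y hnc]; simp)
  have hs0 : ∀ x, 0 ≤ s x := by
    intro x; simp only [hs]; by_cases hx : x ∈ S <;> simp [hx]
  have ht0 : ∀ x, 0 ≤ t x := by
    intro x; simp only [ht]; by_cases hx : x ∈ T <;> simp [hx]
  have hsD : ∀ x, 0 < s x → x ∈ D := by
    intro x hx
    simp only [hs] at hx
    by_cases hmem : x ∈ S
    · exact hS hmem
    · rw [if_neg hmem] at hx; linarith
  have hspos : ∀ x, 0 < s x → x ∈ S := by
    intro x hx
    by_contra hmem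
    simp only [hs, if_neg hmem] at hx
    linarith
  have htpos : ∀ x, 0 < t x → x ∈ T := by
    intro x hx
    by_contra hmem
    simp only [ht, if_neg hmem] at hx
    linarith
  have hstd : ∀ x, ¬(0 < s x ∧ 0 < t x) := by
    intro x ⟨h1, h2⟩
    exact Finset.disjoint_left.mp hST (hspos x h1) (htpos x h2)
  have hmaxsub : ∀ a : ℝ, max a 0 - max (-a) 0 = a := by
    intro a
    rcases le_total a 0 with haa | haa
    · rw [max_eq_right haa, max_eq_left (by linarith)]; ring
    · rw [max_eq_left haa, max_eq_right (by linarith)]; ring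
  have hnet : ∀ x, netdiv h x = s x - t x := by
    intro x
    have h1 : netdiv h x = vdiv f x := by
      unfold netdiv vdiv
      apply Finset.sum_congr rfl
      intro y _
      simp only [hh]
      rw [hskew y x]
      exact hmaxsub (f x y)
    rw [h1]
    simp only [hs, ht]
    by_cases hxS : x ∈ S
    · rw [if_pos hxS, if_neg (Finset.disjoint_left.mp hST hxS), hsatS x hxS]
      ring
    · by_cases hxT : x ∈ T
      · rw [if_neg hxS, if_pos hxT, hsatT x hxT]
        ring
      · rw [if_neg hxS, if_neg hxT, hcons x hxS hxT]
        ring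
  obtain ⟨P, wt, hw0, hwst, hwD, hwa, hwb, hwcong⟩ := decomp G D
    (((Finset.univ ×ˢ Finset.univ).filter (fun xy : V × V => h xy.1 xy.2 ≠ 0)).card
      + (Finset.univ.filter (fun x => 0 < s x)).card
      + (Finset.univ.filter (fun x => 0 < t x)).card)
    h s t hh0 hhD hs0 ht0 hsD hstd hnet (le_refl _)
  refine ⟨P, wt, hw0, ?_, hwD, ?_, ?_, ?_⟩
  · intro p hp
    exact ⟨hspos _ (hwst p hp).1, htpos _ (hwst p hp).2⟩
  · intro a ha
    rw [hwa a]
    simp [hs, ha]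
  · intro b hb
    rw [hwb b]
    simp [ht, hb]
  · intro e
    refine Sym2.inductionOn e ?_
    intro x y
    have hcnt1 : ∀ p ∈ P.filter (fun p => s(x, y) ∈ p.2.2.edges),
        (1:ℝ) ≤ (cnt p.2.2 x y : ℝ) + (cnt p.2.2 y x : ℝ) := by
      intro p hp
      have he := (Finset.mem_filter.mp hp).2
      obtain ⟨x', y', heq, hpos⟩ := edges_cnt p.2.2 he
      rcases Sym2.eq_iff.mp heq.symm with ⟨h1, h2⟩ | ⟨h1, h2⟩
      · rw [h1, h2] at hpos
        have h3 : (1:ℝ) ≤ (cnt p.2.2 x y : ℝ) := by exact_mod_cast hpos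
        have h4 : (0:ℝ) ≤ (cnt p.2.2 y x : ℝ) := Nat.cast_nonneg _
        linarith
      · rw [h1, h2] at hpos
        have h3 : (1:ℝ) ≤ (cnt p.2.2 y x : ℝ) := by exact_mod_cast hpos
        have h4 : (0:ℝ) ≤ (cnt p.2.2 x y : ℝ) := Nat.cast_nonneg _
        linarith
    have hstep1 : ∑ p ∈ P.filter (fun p => s(x, y) ∈ p.2.2.edges), wt p
        ≤ ∑ p ∈ P.filter (fun p => s(x, y) ∈ p.2.2.edges),
            wt p * ((cnt p.2.2 x y : ℝ) + (cnt p.2.2 y x : ℝ)) := by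
      apply Finset.sum_le_sum
      intro p hp
      exact le_mul_of_one_le_right (hw0 p (Finset.mem_of_mem_filter p hp)) (hcnt1 p hp)
    have hstep2 : ∑ p ∈ P.filter (fun p => s(x, y) ∈ p.2.2.edges),
          wt p * ((cnt p.2.2 x y : ℝ) + (cnt p.2.2 y x : ℝ))
        ≤ ∑ p ∈ P, wt p * ((cnt p.2.2 x y : ℝ) + (cnt p.2.2 y x : ℝ)) := by
      apply Finset.sum_le_sum_of_subset_of_nonneg (Finset.filter_subset _ _)
      intro p hp _
      apply mul_nonneg (hw0 p hp)
      positivity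
    have hstep3 : ∑ p ∈ P, wt p * ((cnt p.2.2 x y : ℝ) + (cnt p.2.2 y x : ℝ))
        ≤ h x y + h y x := by
      have e1 : ∑ p ∈ P, wt p * ((cnt p.2.2 x y : ℝ) + (cnt p.2.2 y x : ℝ))
          = ∑ p ∈ P, wt p * (cnt p.2.2 x y : ℝ) + ∑ p ∈ P, wt p * (cnt p.2.2 y x : ℝ) := by
        rw [← Finset.sum_add_distrib]
        apply Finset.sum_congr rfl
        intro p _
        ring
      rw [e1]
      exact add_le_add (hwcong x y) (hwcong y x)
    have hstep4 : h x y + h y x ≤ η := by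
      simp only [hh]
      rcases le_total (f x y) 0 with hf | hf
      · rw [max_eq_right hf, max_eq_left (by rw [hskew y x]; linarith)]
        rw [hskew y x]
        linarith [hcap y x, hskew y x]
      · rw [max_eq_left hf, max_eq_right (by rw [hskew y x]; linarith)]
        linarith [hcap x y]
    linarith


end Stmt4
/-- Let `C` be a cluster whose boundary `Γ(C)` is `α`-well-linked in
`G[C]`, and let `(A,B)` be a minimum `ρ`-balanced cut of `G[C]` with respect to `Γ(C)`
(for `0 < ρ ≤ 1/4`), with `|Γ(C) ∩ A| ≥ |Γ(C) ∩ B|`.  Then the boundary of `A` is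
`α/(2+α)`-well-linked in `G[A]`. -/
theorem stmt4 [Fintype V] (G : SimpleGraph V) (C : Finset V)
    (α : ℝ) (hα0 : 0 < α) (hα1 : α ≤ 1)
    (hwl : WellLinkedIn G C (bdry G C) α)
    (ρ : ℝ) (hρ0 : 0 < ρ) (hρ4 : ρ ≤ 1 / 4)
    (A B : Finset V)
    (hbal : IsBalancedCut (bdry G C) A B C ρ)
    (hmincut : ∀ A' B' : Finset V, IsBalancedCut (bdry G C) A' B' C ρ →
      cutCard G A B ≤ cutCard G A' B')
    (hminside : ∀ A' B' : Finset V, IsBalancedCut (bdry G C) A' B' C ρ →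
      cutCard G A' B' = cutCard G A B →
      min ((A ∩ bdry G C).card) ((B ∩ bdry G C).card) ≤
        min ((A' ∩ bdry G C).card) ((B' ∩ bdry G C).card))
    (hAB : (B ∩ bdry G C).card ≤ (A ∩ bdry G C).card) :
    WellLinkedIn G A (bdry G A) (α / (2 + α)) := by
  intro T' T'' hT' hT'' hdisjT hcardT
  have h2α : (0:ℝ) < 2 + α := by linarith
  have hαfrac : 0 < α / (2 + α) := div_pos hα0 h2α
  have hbdryA : bdry G A ⊆ A := Stmt4.bdry_subset
  apply Stmt4.exists_flow G A T' T'' (hT'.trans hbdryA) (hT''.trans hbdryA) hdisjT hcardT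
    _ (by positivity)
  intro X hXA
  set Y := A \ X with hY
  have hXY : X ∪ Y = A := Finset.union_sdiff_of_subset hXA
  have hdXY : Disjoint X Y := Finset.disjoint_sdiff
  have hkey : α * min (((bdry G A ∩ X).card : ℝ)) (((bdry G A ∩ Y).card : ℝ))
      ≤ (2 + α) * (cutCard G X Y : ℝ) := by
    rcases le_total ((bdry G C ∩ X).card) ((bdry G C ∩ Y).card) with hord | hord
    · exact Stmt4.key_cut G C α ρ hα0 hwl hρ4 A B hbal hmincut hAB X Y hXY hdXY hord
    · have hk := Stmt4.key_cut G C α ρ hα0 hwl hρ4 A B hbal hmincut hAB Y X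
        (by rw [Finset.union_comm]; exact hXY) hdXY.symm hord
      rw [Stmt4.cutCard_comm G Y X, min_comm] at hk
      exact hk
  have hsplitT' : (T' ∩ X).card + (T' ∩ Y).card = T'.card := by
    rw [← Finset.card_union_of_disjoint (Finset.disjoint_of_subset_left
        Finset.inter_subset_right (Finset.disjoint_of_subset_right
        Finset.inter_subset_right hdXY)),
      ← Finset.inter_union_distrib_left, hXY,
      Finset.inter_eq_left.mpr (hT'.trans hbdryA)]
  have hsplitT'' : (T'' ∩ X).card + (T'' ∩ Y).card = T''.card := by
    rw [← Finset.card_union_of_disjoint (Finset.disjoint_of_subset_left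
        Finset.inter_subset_right (Finset.disjoint_of_subset_right
        Finset.inter_subset_right hdXY)),
      ← Finset.inter_union_distrib_left, hXY,
      Finset.inter_eq_left.mpr (hT''.trans hbdryA)]
  have hb1 : ((T' ∩ X).card : ℝ) ≤ ((bdry G A ∩ X).card : ℝ) := by
    exact_mod_cast Nat.cast_le.mpr (Finset.card_le_card
      (Finset.inter_subset_inter hT' (Finset.Subset.refl _)))
  have hb2' : ((T'' ∩ Y).card : ℝ) ≤ ((bdry G A ∩ Y).card : ℝ) := by
    exact_mod_cast Nat.cast_le.mpr (Finset.card_le_card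
      (Finset.inter_subset_inter hT'' (Finset.Subset.refl _)))
  have hb2 : ((T' ∩ X).card : ℝ) - ((T'' ∩ X).card : ℝ) ≤ ((bdry G A ∩ Y).card : ℝ) := by
    have e1 : ((T' ∩ X).card : ℝ) + ((T' ∩ Y).card : ℝ) = (T'.card : ℝ) := by
      exact_mod_cast hsplitT'
    have e2 : ((T'' ∩ X).card : ℝ) + ((T'' ∩ Y).card : ℝ) = (T''.card : ℝ) := by
      exact_mod_cast hsplitT''
    have e3 : (T'.card : ℝ) = (T''.card : ℝ) := by exact_mod_cast hcardT
    have e4 : (0:ℝ) ≤ ((T' ∩ Y).card : ℝ) := Nat.cast_nonneg _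
    linarith
  have hmge : ((T' ∩ X).card : ℝ) - ((T'' ∩ X).card : ℝ)
      ≤ min (((bdry G A ∩ X).card : ℝ)) (((bdry G A ∩ Y).card : ℝ)) := by
    apply le_min _ hb2
    have : (0:ℝ) ≤ ((T'' ∩ X).card : ℝ) := Nat.cast_nonneg _
    linarith
  have hd : ((T' ∩ X).card : ℝ) - ((T'' ∩ X).card : ℝ)
      ≤ ((2 + α) * (cutCard G X Y : ℝ)) / α := by
    rw [le_div_iff₀ hα0]
    calc (((T' ∩ X).card : ℝ) - ((T'' ∩ X).card : ℝ)) * α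
        = α * (((T' ∩ X).card : ℝ) - ((T'' ∩ X).card : ℝ)) := mul_comm _ _
    _ ≤ α * min (((bdry G A ∩ X).card : ℝ)) (((bdry G A ∩ Y).card : ℝ)) :=
        mul_le_mul_of_nonneg_left hmge hα0.le
    _ ≤ (2 + α) * (cutCard G X Y : ℝ) := hkey
  have hηval : (1 : ℝ) / (α / (2 + α)) = (2 + α) / α := one_div_div _ _
  rw [hηval]
  have hfin : ((2 + α) / α) * (cutCard G X Y : ℝ)
      = ((2 + α) * (cutCard G X Y : ℝ)) / α := div_mul_eq_mul_div _ _ _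
  rw [hfin]
  linarith
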